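/- Let A be an antichain of a finite poset P that intersects every maximal chain of P. Then e(P) = Σ_{t∈A} e(P − t), where e(Q) denotes the number of linear extensions of a poset Q. -/

import Mathlib

/-- The number of linear extensions of a finite poset `α`. -/
noncomputable def linExtCount (α : Type*) [PartialOrder α] [Fintype α] : ℕ :=
  Nat.card {f : α ≃ Fin (Fintype.card α) // ∀ a b : α, a < b → f a < f b}

open scoped Classical

namespace Stmt11Aux

/-- Conjugation invariance of the count of strictly monotone equivalences. -/
lemma extCard_congr {γ δ L M : Type*} [Preorder γ] [Preorder δ] [Preorder L] [Preorder M]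
    (e : γ ≃o δ) (ψ : L ≃o M) :
    Nat.card {f : γ ≃ L // ∀ a b : γ, a < b → f a < f b} =
    Nat.card {f : δ ≃ M // ∀ a b : δ, a < b → f a < f b} := by
  apply Nat.card_congr
  refine Equiv.subtypeEquiv (Equiv.equivCongr e.toEquiv ψ.toEquiv) (fun f => ?_)
  constructor
  · intro hf a b hab
    simp only [Equiv.equivCongr_apply_apply]
    exact ψ.lt_iff_lt.2 (hf _ _ (e.symm.lt_iff_lt.2 hab))
  · intro hf a b hab
    simp only [Equiv.equivCongr_apply_apply] at hf
    have h2 := hf (e.toEquiv a) (e.toEquiv b) (e.lt_iff_lt.2 hab)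
    rw [Equiv.symm_apply_apply, Equiv.symm_apply_apply] at h2
    exact ψ.lt_iff_lt.1 h2

lemma linExtCount_irrel {γ : Type*} [PartialOrder γ] (i1 i2 : Fintype γ) :
    @linExtCount γ _ i1 = @linExtCount γ _ i2 := by
  rw [Subsingleton.elim i1 i2]

lemma linExtCount_congr {γ δ : Type*} [PartialOrder γ] [Fintype γ] [PartialOrder δ] [Fintype δ]
    (e : γ ≃o δ) : linExtCount γ = linExtCount δ := by
  have hc : Fintype.card γ = Fintype.card δ := Fintype.card_congr e.toEquiv
  unfold linExtCount
  exact extCard_congr e (Fin.castOrderIso hc)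

lemma card_linext {γ L : Type*} [PartialOrder γ] [Fintype γ] [LinearOrder L] [Fintype L]
    (h : Fintype.card L = Fintype.card γ) :
    Nat.card {f : γ ≃ L // ∀ a b : γ, a < b → f a < f b} = linExtCount γ := by
  unfold linExtCount
  exact extCard_congr (OrderIso.refl γ) (Fintype.orderIsoFinOfCardEq L h).symm

lemma nat_card_sigma {ι : Type*} [Fintype ι] (f : ι → Type*) [∀ i, Finite (f i)] :
    Nat.card (Σ i, f i) = ∑ i, Nat.card (f i) := by
  classical
  letI : ∀ i, Fintype (f i) := fun i => Fintype.ofFinite _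
  simp [Nat.card_eq_fintype_card]

noncomputable def minFinset (β : Type*) [Fintype β] [PartialOrder β] : Finset β :=
  Finset.univ.filter (fun m => ∀ b : β, ¬ b < m)

noncomputable def fib_equiv (β : Type*) [Fintype β] [PartialOrder β] (hn : 0 < Fintype.card β) (m : β)
    (hmm : ∀ b : β, ¬ b < m) :
    {fp : {f : β ≃ Fin (Fintype.card β) // ∀ a b : β, a < b → f a < f b} //
        fp.1.symm ⟨0, hn⟩ = m} ≃
      {g : {x : β // x ≠ m} ≃ {y : Fin (Fintype.card β) // y ≠ ⟨0, hn⟩} //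
        ∀ a b, a < b → g a < g b} := by
  classical
  set z0 : Fin (Fintype.card β) := ⟨0, hn⟩ with hz0
  refine ⟨fun fp => ⟨Equiv.subtypeEquiv fp.1.1 (fun x => not_congr ?_), ?_⟩,
          fun gp => ⟨⟨⟨fun x => if h : x = m then z0 else (gp.1 ⟨x, h⟩).1,
            fun y => if h : y = z0 then m else (gp.1.symm ⟨y, h⟩).1, ?_, ?_⟩, ?_⟩, ?_⟩,
          ?_, ?_⟩
  · -- x = m ↔ f x = z0
    have hfm : fp.1.1 m = z0 := (Equiv.apply_eq_iff_eq_symm_apply _).2 fp.2.symm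
    exact ⟨fun hx => hx ▸ hfm, fun hx => fp.1.1.injective (hx.trans hfm.symm)⟩
  · -- strict mono of restricted map
    rintro ⟨x1, h1⟩ ⟨x2, h2⟩ h12
    have h12' : x1 < x2 := Subtype.mk_lt_mk.1 h12
    have := fp.1.2 x1 x2 h12'
    simpa [Equiv.subtypeEquiv, Subtype.mk_lt_mk] using this
  · -- left_inv of constructed equiv
    intro x
    dsimp only
    by_cases h : x = m
    · rw [dif_pos h, dif_pos rfl]; exact h.symm
    · rw [dif_neg h, dif_neg (gp.1 ⟨x, h⟩).2, Subtype.coe_eta, Equiv.symm_apply_apply]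
  · -- right_inv
    intro y
    dsimp only
    by_cases h : y = z0
    · rw [dif_pos h, dif_pos rfl]; exact h.symm
    · rw [dif_neg h, dif_neg (gp.1.symm ⟨y, h⟩).2, Subtype.coe_eta, Equiv.apply_symm_apply]
  · -- strict mono of constructed equiv
    intro a b hab
    simp only [Equiv.coe_fn_mk]
    by_cases hb : b = m
    · exact absurd (hb ▸ hab) (hmm a)
    · by_cases ha : a = m
      · rw [dif_pos ha, dif_neg hb]
        have h0 : ((gp.1 ⟨b, hb⟩).1 : Fin _) ≠ z0 := (gp.1 ⟨b, hb⟩).2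
        rw [Fin.lt_def]
        show (0 : ℕ) < ((gp.1 ⟨b, hb⟩).1 : Fin _).1
        rcases Nat.eq_zero_or_pos ((gp.1 ⟨b, hb⟩).1 : Fin _).1 with h | h
        · exact absurd (Fin.ext h) h0
        · exact h
      · rw [dif_neg ha, dif_neg hb]
        exact gp.2 ⟨a, ha⟩ ⟨b, hb⟩ (Subtype.mk_lt_mk.2 hab)
  · -- symm z0 = m
    simp only [Equiv.coe_fn_symm_mk]
    exact dif_pos trivial
  · -- left inverse of the big equiv
    rintro ⟨⟨f, hf⟩, hfm⟩
    apply Subtype.ext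
    apply Subtype.ext
    apply Equiv.ext
    intro x
    by_cases h : x = m
    · subst h
      show (if h : x = x then z0 else _) = f x
      rw [dif_pos rfl, ← hfm, Equiv.apply_symm_apply]
    · show (if hh : x = m then z0 else _) = f x
      rw [dif_neg h]
      rfl
  · -- right inverse of the big equiv
    rintro ⟨g, hg⟩
    apply Subtype.ext
    apply Equiv.ext
    rintro ⟨x, hx⟩
    apply Subtype.ext
    show (if h : x = m then z0 else ((g ⟨x, h⟩ : {y : Fin _ // y ≠ z0}) : Fin _)) = _
    rw [dif_neg hx]

lemma L1abs (β : Type*) [Fintype β] [PartialOrder β] [Nonempty β] :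
    linExtCount β = ∑ m ∈ minFinset β, linExtCount {x : β // x ≠ m} := by
  classical
  have hn : 0 < Fintype.card β := Fintype.card_pos
  set z0 : Fin (Fintype.card β) := ⟨0, hn⟩ with hz0
  have h2 : linExtCount β =
      ∑ m : β, Nat.card {fp : {f : β ≃ Fin (Fintype.card β) //
        ∀ a b : β, a < b → f a < f b} // fp.1.symm z0 = m} := by
    rw [show linExtCount β = Nat.card {f : β ≃ Fin (Fintype.card β) //
      ∀ a b : β, a < b → f a < f b} from rfl]
    rw [Nat.card_congr (Equiv.sigmaFiberEquiv
      (fun fp : {f : β ≃ Fin (Fintype.card β) // ∀ a b : β, a < b → f a < f b} =>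
        fp.1.symm z0)).symm]
    exact nat_card_sigma _
  have hminfib : ∀ fp : {f : β ≃ Fin (Fintype.card β) // ∀ a b : β, a < b → f a < f b},
      ∀ b, ¬ b < fp.1.symm z0 := by
    intro fp b hb
    have := fp.2 b _ hb
    rw [Equiv.apply_symm_apply] at this
    rw [Fin.lt_def] at this
    exact Nat.not_lt_zero _ this
  rw [h2]
  rw [← Finset.sum_subset (Finset.subset_univ (minFinset β)) (fun m _ hm => ?_)]
  · refine Finset.sum_congr rfl (fun m hmM => ?_)
    have hmm : ∀ b : β, ¬ b < m := by
      have := (Finset.mem_filter.1 hmM).2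
      exact this
    have hcard : Fintype.card {y : Fin (Fintype.card β) // y ≠ z0} =
        Fintype.card {x : β // x ≠ m} := by
      rw [Fintype.card_subtype_compl, Fintype.card_subtype_compl,
        Fintype.card_subtype_eq, Fintype.card_subtype_eq, Fintype.card_fin]
    rw [← card_linext hcard]
    exact Nat.card_congr (fib_equiv β hn m hmm)
  · -- fibers over non-minimal elements are empty
    have : IsEmpty {fp : {f : β ≃ Fin (Fintype.card β) //
        ∀ a b : β, a < b → f a < f b} // fp.1.symm z0 = m} := by
      constructor
      rintro ⟨fp, rfl⟩
      exact hm (Finset.mem_filter.2 ⟨Finset.mem_univ _, hminfib fp⟩)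
    exact Nat.card_of_isEmpty

section Ambient

variable {α : Type*} [Fintype α] [PartialOrder α]

/-- Number of linear extensions of the sub-poset on `s`. -/
noncomputable def E (s : Finset α) : ℕ := linExtCount {x : α // x ∈ s}

/-- `c` is a maximal chain among chains contained in `s`. -/
def MaxChainIn (s : Finset α) (c : Set α) : Prop :=
  IsChain (· ≤ ·) c ∧ c ⊆ ↑s ∧
    ∀ ⦃c' : Set α⦄, IsChain (· ≤ ·) c' → c' ⊆ ↑s → c ⊆ c' → c' = c

lemma MaxChainIn.mem_of_comp {s : Finset α} {c : Set α} (h : MaxChainIn s c)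
    {z : α} (hz : z ∈ s) (hcomp : ∀ y ∈ c, z ≤ y ∨ y ≤ z) : z ∈ c := by
  have hch : IsChain (· ≤ ·) (insert z c) := h.1.insert (fun y hy _ => hcomp y hy)
  have := h.2.2 hch (Set.insert_subset (Finset.mem_coe.2 hz) h.2.1) (Set.subset_insert z c)
  rw [← this]
  exact Set.mem_insert z c

lemma maxChain_lift {s : Finset α} {a : α} (ha : a ∈ s) {c : Set α}
    (h : MaxChainIn (s.erase a) c) :
    MaxChainIn s c ∨ ((∀ y ∈ c, a ≤ y ∨ y ≤ a) ∧ MaxChainIn s (insert a c)) := by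
  have hcs : c ⊆ ↑s := fun x hx => Finset.mem_coe.2
    (Finset.mem_of_mem_erase (Finset.mem_coe.1 (h.2.1 hx)))
  by_cases hcomp : ∀ y ∈ c, a ≤ y ∨ y ≤ a
  · right
    refine ⟨hcomp, h.1.insert (fun y hy _ => hcomp y hy),
      Set.insert_subset (Finset.mem_coe.2 ha) hcs, ?_⟩
    intro c'' hch hsub hsup
    apply Set.Subset.antisymm _ hsup
    intro z hz
    by_cases hza : z = a
    · exact hza ▸ Set.mem_insert _ _
    · refine Set.mem_insert_of_mem a (h.mem_of_comp
        (Finset.mem_erase.2 ⟨hza, Finset.mem_coe.1 (hsub hz)⟩) (fun y hy => ?_))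
      by_cases hzy : z = y
      · exact Or.inl (hzy ▸ le_rfl)
      · exact hch hz (hsup (Set.mem_insert_of_mem a hy)) hzy
  · left
    push_neg at hcomp
    obtain ⟨y0, hy0c, hy0⟩ := hcomp
    refine ⟨h.1, hcs, ?_⟩
    intro c'' hch hsub hsup
    apply Set.Subset.antisymm _ hsup
    intro z hz
    by_cases hza : z = a
    · exfalso
      subst hza
      have hzy0 : z ≠ y0 := fun hh => hy0.1 (hh ▸ le_rfl)
      rcases hch hz (hsup hy0c) hzy0 with h' | h'
      · exact hy0.1 h'
      · exact hy0.2 h'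
    · refine h.mem_of_comp (Finset.mem_erase.2 ⟨hza, Finset.mem_coe.1 (hsub hz)⟩)
        (fun y hy => ?_)
      by_cases hzy : z = y
      · exact Or.inl (hzy ▸ le_rfl)
      · exact hch hz (hsup hy) hzy

noncomputable def minOf (s : Finset α) : Finset α := s.filter (fun m => ∀ b ∈ s, ¬ b < m)

noncomputable def Na (s : Finset α) (a : α) : Finset α :=
  s.filter (fun x => a < x ∧ ∀ b ∈ s, b < x → b = a)

/-- The order isomorphism between removing `m` inside the sub-poset on `s`
and the sub-poset on `s.erase m`. -/
def eraseIso (s : Finset α) (m : {x : α // x ∈ s}) :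
    {y : {x : α // x ∈ s} // y ≠ m} ≃o {x : α // x ∈ s.erase m.1} where
  toFun y := ⟨y.1.1, Finset.mem_erase.2 ⟨fun h => y.2 (Subtype.ext h), y.1.2⟩⟩
  invFun x := ⟨⟨x.1, Finset.mem_of_mem_erase x.2⟩,
    fun h => (Finset.mem_erase.1 x.2).1 (congrArg Subtype.val h)⟩
  left_inv y := rfl
  right_inv x := rfl
  map_rel_iff' := Iff.rfl

lemma L1amb (s : Finset α) (hs : s.Nonempty) :
    E s = ∑ m ∈ minOf s, E (s.erase m) := by
  obtain ⟨w, hw⟩ := hs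
  haveI : Nonempty {x : α // x ∈ s} := ⟨⟨w, hw⟩⟩
  rw [show E s = linExtCount {x : α // x ∈ s} from rfl, L1abs]
  refine Finset.sum_bij (fun m _ => m.1) ?_ ?_ ?_ ?_
  · intro m hm
    have hm' := (Finset.mem_filter.1 hm).2
    refine Finset.mem_filter.2 ⟨m.2, fun b hb hlt => ?_⟩
    exact hm' ⟨b, hb⟩ (Subtype.mk_lt_mk.2 hlt)
  · intro m1 _ m2 _ h
    exact Subtype.ext h
  · intro m hm
    have hm' := (Finset.mem_filter.1 hm).2
    refine ⟨⟨m, (Finset.mem_filter.1 hm).1⟩, Finset.mem_filter.2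
      ⟨Finset.mem_univ _, fun b hlt => ?_⟩, rfl⟩
    exact hm' b.1 b.2 (Subtype.mk_lt_mk.1 hlt)
  · intro m _
    exact (linExtCount_irrel _ _).trans ((linExtCount_congr (eraseIso s m)).trans (linExtCount_irrel _ _))

lemma chain_exists_least {c : Set α} (hch : IsChain (· ≤ ·) c) (hne : c.Nonempty) :
    ∃ x ∈ c, ∀ y ∈ c, x ≤ y := by
  obtain ⟨x, hx, hmin'⟩ := (Set.toFinite c).exists_minimal hne
  have hmin : ∀ y ∈ c, y ≤ x → x = y := fun y hy h => le_antisymm (hmin' hy h) h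
  refine ⟨x, hx, fun y hy => ?_⟩
  by_cases hxy : x = y
  · exact hxy ▸ le_rfl
  · rcases hch hx hy hxy with h | h
    · exact h
    · exact le_of_eq (hmin y hy h)

lemma cutset_erase_not_mem {s A : Finset α} {m : α} (hm : m ∈ s) (hmA : m ∉ A)
    (hcut : ∀ c, MaxChainIn s c → ((A : Set α) ∩ c).Nonempty) :
    ∀ c, MaxChainIn (s.erase m) c → ((A : Set α) ∩ c).Nonempty := by
  intro c hc
  rcases maxChain_lift hm hc with h | ⟨_, h⟩
  · exact hcut c h
  · obtain ⟨a', ha'⟩ := hcut _ h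
    refine ⟨a', ha'.1, ?_⟩
    rcases Set.mem_insert_iff.1 ha'.2 with rfl | h'
    · exact absurd (Finset.mem_coe.1 ha'.1) hmA
    · exact h'

lemma cutset_erase_min_mem {s A : Finset α} {a : α} (hAs : A ⊆ s) (haA : a ∈ A)
    (haM : a ∈ minOf s) (hcut : ∀ c, MaxChainIn s c → ((A : Set α) ∩ c).Nonempty)
    (hs' : (s.erase a).Nonempty) :
    ∀ c, MaxChainIn (s.erase a) c →
      (((A.erase a ∪ Na s a : Finset α) : Set α) ∩ c).Nonempty := by
  intro c hc
  have has : a ∈ s := hAs haA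
  rcases maxChain_lift has hc with h | ⟨hcomp, h⟩
  · obtain ⟨a', ha'A, ha'c⟩ := hcut c h
    have ha'ne : a' ≠ a := (Finset.mem_erase.1 (Finset.mem_coe.1 (hc.2.1 ha'c))).1
    refine ⟨a', ?_, ha'c⟩
    simp only [Finset.coe_union, Set.mem_union, Finset.mem_coe, Finset.mem_erase]
    exact Or.inl ⟨ha'ne, Finset.mem_coe.1 ha'A⟩
  · have hcne : c.Nonempty := by
      by_contra hemp
      rw [Set.not_nonempty_iff_eq_empty] at hemp
      subst hemp
      obtain ⟨q, hq⟩ := hs'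
      have := hc.2.2 (IsChain.singleton (a := q))
        (by rw [Set.singleton_subset_iff]; exact Finset.mem_coe.2 hq) (Set.empty_subset _)
      simp at this
    obtain ⟨x, hxc, hxmin⟩ := chain_exists_least hc.1 hcne
    have hxs' : x ∈ s.erase a := Finset.mem_coe.1 (hc.2.1 hxc)
    have hxa : x ≠ a := (Finset.mem_erase.1 hxs').1
    have hxs : x ∈ s := Finset.mem_of_mem_erase hxs'
    have hax : a < x := by
      rcases hcomp x hxc with h1 | h1
      · exact lt_of_le_of_ne h1 (Ne.symm hxa)
      · exact absurd (lt_of_le_of_ne h1 hxa) ((Finset.mem_filter.1 haM).2 x hxs)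
    have hNa : x ∈ Na s a := by
      refine Finset.mem_filter.2 ⟨hxs, hax, fun b hb hbx => ?_⟩
      by_contra hba
      have hbs' : b ∈ s.erase a := Finset.mem_erase.2 ⟨hba, hb⟩
      have hbc : b ∈ c := hc.mem_of_comp hbs'
        (fun y hy => Or.inl (le_trans hbx.le (hxmin y hy)))
      exact lt_irrefl b (lt_of_lt_of_le hbx (hxmin b hbc))
    refine ⟨x, ?_, hxc⟩
    simp only [Finset.coe_union, Set.mem_union, Finset.mem_coe]
    exact Or.inr hNa

lemma B_antichain {s A : Finset α} {a : α} (hAs : A ⊆ s)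
    (hA : IsAntichain (· ≤ ·) (A : Set α)) (haA : a ∈ A) :
    IsAntichain (· ≤ ·) ((A.erase a ∪ Na s a : Finset α) : Set α) := by
  intro x hx y hy hxy hle
  simp only [Finset.coe_union, Set.mem_union, Finset.mem_coe, Finset.mem_erase] at hx hy
  rcases hx with ⟨hxa, hxA⟩ | hxNa
  · rcases hy with ⟨hya, hyA⟩ | hyNa
    · exact hA (Finset.mem_coe.2 hxA) (Finset.mem_coe.2 hyA) hxy hle
    · have hxy' : x < y := lt_of_le_of_ne hle hxy
      exact hxa ((Finset.mem_filter.1 hyNa).2.2 x (hAs hxA) hxy')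
  · rcases hy with ⟨hya, hyA⟩ | hyNa
    · have hay : a < y := lt_of_lt_of_le (Finset.mem_filter.1 hxNa).2.1 hle
      exact hA (Finset.mem_coe.2 haA) (Finset.mem_coe.2 hyA) (ne_of_lt hay) hay.le
    · have hxy' : x < y := lt_of_le_of_ne hle hxy
      have hxeq : x = a := (Finset.mem_filter.1 hyNa).2.2 x (Finset.mem_filter.1 hxNa).1 hxy'
      exact absurd (Finset.mem_filter.1 hxNa).2.1 (hxeq ▸ lt_irrefl a)

lemma disj_A_Na {s A : Finset α} {a : α} (hA : IsAntichain (· ≤ ·) (A : Set α)) (haA : a ∈ A) :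
    Disjoint (A.erase a) (Na s a) := by
  rw [Finset.disjoint_left]
  intro x hx hxNa
  have hax : a < x := (Finset.mem_filter.1 hxNa).2.1
  exact hA (Finset.mem_coe.2 haA) (Finset.mem_coe.2 (Finset.mem_of_mem_erase hx))
    (ne_of_lt hax) hax.le

lemma disj_min_Na {s : Finset α} {a : α} (has : a ∈ s) :
    Disjoint ((minOf s).erase a) (Na s a) := by
  rw [Finset.disjoint_left]
  intro x hx hxNa
  have hax : a < x := (Finset.mem_filter.1 hxNa).2.1
  exact (Finset.mem_filter.1 (Finset.mem_of_mem_erase hx)).2 a has hax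

lemma minOf_erase_min {s : Finset α} {a : α} (haM : a ∈ minOf s) :
    minOf (s.erase a) = (minOf s).erase a ∪ Na s a := by
  ext x
  constructor
  · intro hx
    obtain ⟨hxe, hmin⟩ := Finset.mem_filter.1 hx
    obtain ⟨hxa, hxs⟩ := Finset.mem_erase.1 hxe
    rw [Finset.mem_union]
    by_cases hax : a < x
    · refine Or.inr (Finset.mem_filter.2 ⟨hxs, hax, fun b hb hbx => ?_⟩)
      by_contra hba
      exact hmin b (Finset.mem_erase.2 ⟨hba, hb⟩) hbx
    · refine Or.inl (Finset.mem_erase.2 ⟨hxa,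
        Finset.mem_filter.2 ⟨hxs, fun b hb hbx => ?_⟩⟩)
      by_cases hba : b = a
      · exact hax (hba ▸ hbx)
      · exact hmin b (Finset.mem_erase.2 ⟨hba, hb⟩) hbx
  · intro hx
    rw [Finset.mem_union] at hx
    rcases hx with hx | hx
    · obtain ⟨hxa, hxm⟩ := Finset.mem_erase.1 hx
      obtain ⟨hxs, hmin⟩ := Finset.mem_filter.1 hxm
      exact Finset.mem_filter.2 ⟨Finset.mem_erase.2 ⟨hxa, hxs⟩,
        fun b hb => hmin b (Finset.mem_of_mem_erase hb)⟩
    · obtain ⟨hxs, hax, hNa⟩ := Finset.mem_filter.1 hx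
      refine Finset.mem_filter.2 ⟨Finset.mem_erase.2 ⟨ne_of_gt hax, hxs⟩, fun b hb hbx => ?_⟩
      exact (Finset.mem_erase.1 hb).1 (hNa b (Finset.mem_of_mem_erase hb) hbx)

lemma minOf_erase_not_min {s : Finset α} {t : α} (hts : t ∈ s) (htM : t ∉ minOf s) :
    minOf (s.erase t) = minOf s := by
  have hex : ∃ u ∈ s, u < t := by
    by_contra hcon
    push_neg at hcon
    exact htM (Finset.mem_filter.2 ⟨hts, fun b hb hbt => (hcon b hb) hbt⟩)
  obtain ⟨u, hus, hut⟩ := hex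
  ext x
  constructor
  · intro hx
    obtain ⟨hxe, hmin⟩ := Finset.mem_filter.1 hx
    obtain ⟨hxt, hxs⟩ := Finset.mem_erase.1 hxe
    refine Finset.mem_filter.2 ⟨hxs, fun b hb hbx => ?_⟩
    by_cases hbt : b = t
    · subst hbt
      exact hmin u (Finset.mem_erase.2 ⟨ne_of_lt hut, hus⟩) (hut.trans hbx)
    · exact hmin b (Finset.mem_erase.2 ⟨hbt, hb⟩) hbx
  · intro hx
    obtain ⟨hxs, hmin⟩ := Finset.mem_filter.1 hx
    have hxt : x ≠ t := fun h => htM (h ▸ hx)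
    exact Finset.mem_filter.2 ⟨Finset.mem_erase.2 ⟨hxt, hxs⟩,
      fun b hb => hmin b (Finset.mem_of_mem_erase hb)⟩

theorem G (s : Finset α) : ∀ A : Finset α, A ⊆ s → IsAntichain (· ≤ ·) (A : Set α) →
    (∀ c, MaxChainIn s c → ((A : Set α) ∩ c).Nonempty) →
    E s = ∑ t ∈ A, E (s.erase t) := by
  induction s using Finset.strongInduction with
  | _ s IH =>
  intro A hAs hA hcut
  rcases Finset.eq_empty_or_nonempty s with rfl | hs
  · exfalso
    have hmax : MaxChainIn (∅ : Finset α) (∅ : Set α) :=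
      ⟨IsChain.empty, by simp, fun c' _ hsub _ => Set.subset_empty_iff.1 (by simpa using hsub)⟩
    obtain ⟨x, hx⟩ := hcut ∅ hmax
    exact Set.notMem_empty x hx.2
  · set M := minOf s with hMdef
    have hL1 : E s = ∑ m ∈ M, E (s.erase m) := L1amb s hs
    -- symmetry of double erasure
    have hsymm : ∀ u v : α, E ((s.erase u).erase v) = E ((s.erase v).erase u) := by
      intro u v
      rw [Finset.erase_right_comm]
    -- expansion of non-minimal antichain elements
    have hexpL : ∀ t ∈ A \ M, E (s.erase t) = ∑ m ∈ M, E ((s.erase t).erase m) := by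
      intro t ht
      obtain ⟨htA, htM⟩ := Finset.mem_sdiff.1 ht
      have hts : t ∈ s := hAs htA
      have hex : ∃ u ∈ s, u < t := by
        by_contra hcon
        push_neg at hcon
        exact htM (Finset.mem_filter.2 ⟨hts, fun b hb hbt => (hcon b hb) hbt⟩)
      obtain ⟨u, hus, hut⟩ := hex
      have hne : (s.erase t).Nonempty := ⟨u, Finset.mem_erase.2 ⟨ne_of_lt hut, hus⟩⟩
      rw [L1amb _ hne, minOf_erase_not_min hts htM]
    -- expansion of non-antichain minimal elements via induction
    have hexpR : ∀ m ∈ M \ A, E (s.erase m) = ∑ t ∈ A, E ((s.erase m).erase t) := by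
      intro m hm
      obtain ⟨hmM, hmA⟩ := Finset.mem_sdiff.1 hm
      have hms : m ∈ s := (Finset.mem_filter.1 hmM).1
      exact IH (s.erase m) (Finset.erase_ssubset hms) A
        (fun x hx => Finset.mem_erase.2 ⟨fun h => hmA (h ▸ hx), hAs hx⟩) hA
        (cutset_erase_not_mem hms hmA hcut)
    -- the key exchange identity for a ∈ A ∩ M
    have hkey : ∀ a ∈ A ∩ M, ∑ m ∈ M \ A, E ((s.erase a).erase m)
        = ∑ t ∈ A \ M, E ((s.erase a).erase t) := by
      intro a haAM
      have haA : a ∈ A := (Finset.mem_inter.1 haAM).1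
      have haM : a ∈ M := (Finset.mem_inter.1 haAM).2
      have has : a ∈ s := hAs haA
      rcases Finset.eq_empty_or_nonempty (s.erase a) with he | hne
      · have h1 : A \ M = ∅ := by
          rw [Finset.eq_empty_iff_forall_notMem]
          intro t ht
          obtain ⟨htA, htM⟩ := Finset.mem_sdiff.1 ht
          have hts : t ∈ s := hAs htA
          have : t = a := by
            by_contra hta
            exact Finset.notMem_empty t (he ▸ Finset.mem_erase.2 ⟨hta, hts⟩)
          exact htM (this ▸ haM)
        have h2 : M \ A = ∅ := by
          rw [Finset.eq_empty_iff_forall_notMem]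
          intro m hm
          obtain ⟨hmM, hmA⟩ := Finset.mem_sdiff.1 hm
          have hms : m ∈ s := (Finset.mem_filter.1 hmM).1
          have : m = a := by
            by_contra hma
            exact Finset.notMem_empty m (he ▸ Finset.mem_erase.2 ⟨hma, hms⟩)
          exact hmA (this ▸ haA)
        rw [h1, h2]
      · -- apply the induction hypothesis to s.erase a with the antichain B
        have hBsub : A.erase a ∪ Na s a ⊆ s.erase a := by
          intro x hx
          rcases Finset.mem_union.1 hx with hx | hx
          · exact Finset.mem_erase.2 ⟨(Finset.mem_erase.1 hx).1,
              hAs (Finset.mem_of_mem_erase hx)⟩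
          · exact Finset.mem_erase.2 ⟨ne_of_gt (Finset.mem_filter.1 hx).2.1,
              (Finset.mem_filter.1 hx).1⟩
        have hIH := IH (s.erase a) (Finset.erase_ssubset has) (A.erase a ∪ Na s a) hBsub
          (B_antichain hAs hA haA) (cutset_erase_min_mem hAs haA haM hcut hne)
        have hL1' := L1amb (s.erase a) hne
        rw [minOf_erase_min haM, ← hMdef] at hL1'
        rw [Finset.sum_union (disj_A_Na hA haA)] at hIH
        rw [Finset.sum_union (disj_min_Na has)] at hL1'
        have hmain : ∑ t ∈ A.erase a, E ((s.erase a).erase t)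
            = ∑ m ∈ M.erase a, E ((s.erase a).erase m) :=
          Nat.add_right_cancel (hIH.symm.trans hL1')
        -- split both sides
        have e2 : (A.erase a) \ M = A \ M := by
          ext x
          simp only [Finset.mem_sdiff, Finset.mem_erase]
          constructor
          · rintro ⟨⟨_, hxA⟩, hxM⟩
            exact ⟨hxA, hxM⟩
          · rintro ⟨hxA, hxM⟩
            exact ⟨⟨fun h => hxM (h ▸ haM), hxA⟩, hxM⟩
        have e4 : (M.erase a) \ A = M \ A := by
          ext x
          simp only [Finset.mem_sdiff, Finset.mem_erase]
          constructor
          · rintro ⟨⟨_, hxM⟩, hxA⟩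
            exact ⟨hxM, hxA⟩
          · rintro ⟨hxM, hxA⟩
            exact ⟨⟨fun h => hxA (h ▸ haA), hxM⟩, hxA⟩
        have e1 : (A.erase a) ∩ M = (M.erase a) ∩ A := by
          ext x
          simp only [Finset.mem_inter, Finset.mem_erase]
          constructor
          · rintro ⟨⟨hxa, hxA⟩, hxM⟩
            exact ⟨⟨hxa, hxM⟩, hxA⟩
          · rintro ⟨⟨hxa, hxM⟩, hxA⟩
            exact ⟨⟨hxa, hxA⟩, hxM⟩
        have hsplit1 : ∑ t ∈ (A.erase a) \ M, E ((s.erase a).erase t)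
            + ∑ t ∈ (A.erase a) ∩ M, E ((s.erase a).erase t)
            = ∑ t ∈ A.erase a, E ((s.erase a).erase t) := by
          have h := Finset.sum_sdiff (f := fun t => E ((s.erase a).erase t))
            ((Finset.inter_subset_left : (A.erase a) ∩ M ⊆ A.erase a))
          rwa [Finset.sdiff_inter_self_left] at h
        have hsplit2 : ∑ t ∈ (M.erase a) \ A, E ((s.erase a).erase t)
            + ∑ t ∈ (M.erase a) ∩ A, E ((s.erase a).erase t)
            = ∑ t ∈ M.erase a, E ((s.erase a).erase t) := by
          have h := Finset.sum_sdiff (f := fun t => E ((s.erase a).erase t))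
            ((Finset.inter_subset_left : (M.erase a) ∩ A ⊆ M.erase a))
          rwa [Finset.sdiff_inter_self_left] at h
        rw [e2, e1] at hsplit1
        rw [e4] at hsplit2
        omega
    -- assemble everything
    rw [hL1]
    have splitA : ∑ t ∈ A \ M, E (s.erase t) + ∑ t ∈ A ∩ M, E (s.erase t)
        = ∑ t ∈ A, E (s.erase t) := by
      have := Finset.sum_sdiff (f := fun t => E (s.erase t))
        (Finset.inter_subset_left (s₁ := A) (s₂ := M))
      rwa [Finset.sdiff_inter_self_left] at this
    have splitM : ∑ m ∈ M \ A, E (s.erase m) + ∑ m ∈ M ∩ A, E (s.erase m)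
        = ∑ m ∈ M, E (s.erase m) := by
      have := Finset.sum_sdiff (f := fun t => E (s.erase t))
        (Finset.inter_subset_left (s₁ := M) (s₂ := A))
      rwa [Finset.sdiff_inter_self_left] at this
    have hMAint : ∑ m ∈ M ∩ A, E (s.erase m) = ∑ t ∈ A ∩ M, E (s.erase t) := by
      rw [Finset.inter_comm]
    -- the main exchange: ∑_{M\A} = ∑_{A\M}
    have swap2 : ∑ t ∈ A ∩ M, ∑ m ∈ M \ A, E ((s.erase t).erase m)
        = ∑ m ∈ A \ M, ∑ t ∈ A ∩ M, E ((s.erase t).erase m) :=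
      (Finset.sum_congr rfl (fun a ha => hkey a ha)).trans Finset.sum_comm
    have hexch : ∑ m ∈ M \ A, E (s.erase m) = ∑ t ∈ A \ M, E (s.erase t) := by
      calc ∑ m ∈ M \ A, E (s.erase m)
          = ∑ m ∈ M \ A, ∑ t ∈ A, E ((s.erase m).erase t) := Finset.sum_congr rfl hexpR
        _ = ∑ m ∈ M \ A, ∑ t ∈ A, E ((s.erase t).erase m) :=
            Finset.sum_congr rfl (fun m _ => Finset.sum_congr rfl (fun t _ => hsymm m t))
        _ = ∑ t ∈ A, ∑ m ∈ M \ A, E ((s.erase t).erase m) := Finset.sum_comm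
        _ = ∑ t ∈ A \ M, ∑ m ∈ M \ A, E ((s.erase t).erase m)
              + ∑ t ∈ A ∩ M, ∑ m ∈ M \ A, E ((s.erase t).erase m) := by
            have h := Finset.sum_sdiff (f := fun t => ∑ m ∈ M \ A, E ((s.erase t).erase m))
              ((Finset.inter_subset_left : A ∩ M ⊆ A))
            rw [Finset.sdiff_inter_self_left] at h
            exact h.symm
        _ = ∑ t ∈ A \ M, ∑ m ∈ M \ A, E ((s.erase t).erase m)
              + ∑ m ∈ A \ M, ∑ t ∈ A ∩ M, E ((s.erase t).erase m) := by rw [swap2]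
        _ = ∑ t ∈ A \ M, ∑ m ∈ M \ A, E ((s.erase t).erase m)
              + ∑ t ∈ A \ M, ∑ m ∈ A ∩ M, E ((s.erase t).erase m) := by
            congr 1
            refine Finset.sum_congr rfl (fun t _ => Finset.sum_congr rfl (fun m _ => ?_))
            exact hsymm m t
        _ = ∑ t ∈ A \ M, (∑ m ∈ M \ A, E ((s.erase t).erase m)
              + ∑ m ∈ A ∩ M, E ((s.erase t).erase m)) := Finset.sum_add_distrib.symm
        _ = ∑ t ∈ A \ M, ∑ m ∈ M, E ((s.erase t).erase m) := by
            refine Finset.sum_congr rfl (fun t _ => ?_)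
            have h := Finset.sum_sdiff (f := fun m => E ((s.erase t).erase m))
              ((Finset.inter_subset_left : M ∩ A ⊆ M))
            rw [Finset.sdiff_inter_self_left] at h
            rw [Finset.inter_comm] at h
            exact h
        _ = ∑ t ∈ A \ M, E (s.erase t) :=
            Finset.sum_congr rfl (fun t ht => (hexpL t ht).symm)
    omega

end Ambient

end Stmt11Aux

open scoped Classical in
/-- Let `A` be an antichain of the finite poset `P` that intersects every
maximal chain of `P`.  Then `e(P) = Σ_{t ∈ A} e(P − t)`. -/
theorem stmt11 {P : Type*} [Fintype P] [PartialOrder P] (A : Finset P)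
    (hA : IsAntichain (· ≤ ·) (A : Set P))
    (hmeet : ∀ c : Set P, IsMaxChain (· ≤ ·) c → ((A : Set P) ∩ c).Nonempty) :
    linExtCount P = ∑ t ∈ A, linExtCount {x : P // x ≠ t} := by
  classical
  have hcut : ∀ c, Stmt11Aux.MaxChainIn (Finset.univ : Finset P) c →
      ((A : Set P) ∩ c).Nonempty := by
    intro c hc
    refine hmeet c ⟨hc.1, fun c' hc' hsub => (hc.2.2 hc' (by simp) hsub).symm⟩
  have h := Stmt11Aux.G Finset.univ A (Finset.subset_univ A) hA hcut
  have h1 : Stmt11Aux.E (Finset.univ : Finset P) = linExtCount P :=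
    Stmt11Aux.linExtCount_congr
      { toFun := fun x => x.1
        invFun := fun x => ⟨x, Finset.mem_univ x⟩
        left_inv := fun _ => rfl
        right_inv := fun _ => rfl
        map_rel_iff' := Iff.rfl }
  have h2 : ∀ t ∈ A, Stmt11Aux.E (Finset.univ.erase t) = linExtCount {x : P // x ≠ t} := by
    intro t _
    have := Stmt11Aux.linExtCount_congr (γ := {x : P // x ∈ Finset.univ.erase t})
      (δ := {x : P // x ≠ t})
      { toFun := fun x => ⟨x.1, (Finset.mem_erase.1 x.2).1⟩
        invFun := fun x => ⟨x.1, Finset.mem_erase.2 ⟨x.2, Finset.mem_univ _⟩⟩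
        left_inv := fun _ => rfl
        right_inv := fun _ => rfl
        map_rel_iff' := Iff.rfl }
    exact (Stmt11Aux.linExtCount_irrel _ _).trans
      (this.trans (Stmt11Aux.linExtCount_irrel _ _))
  rw [← h1, h]
  exact Finset.sum_congr rfl h2
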